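/- Fix real α > 0 and integer j ≥ 1. If ω : 𝔻 → 𝔻 is analytic with ω(0) = 0, then for every analytic f : 𝔻 → ℂ one has the contractive subordination inequality ∫_𝔻 |f(ω(z))|² dv_{α,j}(z) ≤ ∫_𝔻 |f(z)|² dv_{α,j}(z). -/

import Mathlib

open Filter MeasureTheory

/-- Iterated exponential: `e₀ = 1`, `e_{j+1} = exp (e_j)`. -/
noncomputable def iterExp : ℕ → ℝ
  | 0 => 1
  | j + 1 => Real.exp (iterExp j)

/-- The `j`-fold iterated logarithm: `log₀ x = x`, `log_{j+1} x = log (log_j x)`. -/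
noncomputable def iterLog : ℕ → ℝ → ℝ
  | 0, x => x
  | j + 1, x => Real.log (iterLog j x)

/-- Density of the measure `v_{α,j}` on the unit disk with respect to Lebesgue measure. -/
noncomputable def vDensity (α : ℝ) (j : ℕ) (z : ℂ) : ℝ :=
  if j = 1 then α * (1 - ‖z‖ ^ 2) ^ (α - 1)
  else α / (1 - ‖z‖ ^ 2) *
    (∏ ℓ ∈ Finset.Icc 1 (j - 2), iterLog ℓ (iterExp ℓ / (1 - ‖z‖ ^ 2)))⁻¹ *
    iterLog (j - 1) (iterExp (j - 1) / (1 - ‖z‖ ^ 2)) ^ (-(α + 1))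

open Metric Set intervalIntegral
open scoped Real NNReal ENNReal

lemma aux_norm_sq_expand (z w : ℂ) :
    ‖z‖^2 = ‖w‖^2 + ‖z - w‖^2 + 2 * ((z - w) * (starRingEnd ℂ) w).re := by
  simp only [Complex.sq_norm, Complex.normSq_apply, Complex.mul_re,
    Complex.sub_re, Complex.sub_im, Complex.conj_re, Complex.conj_im]
  ring

lemma aux_meanValue {r : ℝ} (hr : 0 < r) {h : ℂ → ℂ}
    (hd : DifferentiableOn ℂ h (closedBall 0 r)) :
    ∫ θ in (-π)..π, h (circleMap 0 r θ) = 2 * π * h 0 := by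
  have h0 : (∮ z in C(0, r), (z - 0)⁻¹ • h z) = (2 * ↑π * Complex.I) • h 0 :=
    hd.circleIntegral_sub_inv_smul (mem_ball_self hr)
  rw [circleIntegral] at h0
  simp only [deriv_circleMap, sub_zero, smul_eq_mul] at h0
  have key : ∀ θ : ℝ, circleMap 0 r θ * Complex.I * ((circleMap 0 r θ)⁻¹ * h (circleMap 0 r θ))
      = Complex.I * h (circleMap 0 r θ) := by
    intro θ
    have hz : circleMap 0 r θ ≠ 0 := circleMap_ne_center hr.ne'
    field_simp
  simp only [key] at h0
  rw [intervalIntegral.integral_const_mul] at h0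
  have h1 : ∫ θ in (0:ℝ)..2*π, h (circleMap 0 r θ) = 2 * π * h 0 := by
    apply mul_left_cancel₀ Complex.I_ne_zero
    rw [h0]; ring
  have hper : Function.Periodic (fun θ => h (circleMap 0 r θ)) (2*π) :=
    (periodic_circleMap 0 r).comp h
  have h2 := hper.intervalIntegral_add_eq (-π) 0
  have e1 : -π + 2*π = π := by ring
  rw [e1, zero_add] at h2
  rw [h2, h1]


lemma aux_circle_cont {r : ℝ} (hr : 0 < r) {h : ℂ → ℂ}
    (hd : DifferentiableOn ℂ h (closedBall 0 r)) :
    Continuous (fun θ => h (circleMap 0 r θ)) := by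
  apply hd.continuousOn.comp_continuous (continuous_circleMap 0 r)
  intro θ
  simp [circleMap_mem_closedBall, abs_of_pos hr, hr.le]

lemma aux_intervalIntegral_re {a b : ℝ} (hab : a ≤ b) {F : ℝ → ℂ}
    (hF : IntervalIntegrable F volume a b) :
    ∫ θ in a..b, (F θ).re = (∫ θ in a..b, F θ).re := by
  rw [intervalIntegral.integral_of_le hab, intervalIntegral.integral_of_le hab]
  exact integral_re (by rw [intervalIntegrable_iff, uIoc_of_le hab] at hF; exact hF)

lemma aux_orth {r : ℝ} (hr : 0 < r) {h : ℂ → ℂ}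
    (hd : DifferentiableOn ℂ h (closedBall 0 r)) :
    ∫ θ in (-π)..π, ‖h (circleMap 0 r θ)‖^2
      = 2*π*‖h 0‖^2 + ∫ θ in (-π)..π, ‖h (circleMap 0 r θ) - h 0‖^2 := by
  have hc : Continuous (fun θ => h (circleMap 0 r θ)) := aux_circle_cont hr hd
  have hab : (-π) ≤ π := by linarith [Real.pi_pos]
  have hint1 : IntervalIntegrable (fun θ => ‖h (circleMap 0 r θ) - h 0‖^2) volume (-π) π :=
    (((hc.sub continuous_const).norm.pow 2)).intervalIntegrable _ _
  have hint2 : IntervalIntegrable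
      (fun θ => 2 * ((h (circleMap 0 r θ) - h 0) * (starRingEnd ℂ) (h 0)).re) volume (-π) π :=
    (continuous_const.mul (Complex.continuous_re.comp ((hc.sub continuous_const).mul continuous_const))).intervalIntegrable _ _
  have expand : ∀ θ : ℝ, ‖h (circleMap 0 r θ)‖^2
      = ‖h 0‖^2 + (‖h (circleMap 0 r θ) - h 0‖^2
        + 2 * ((h (circleMap 0 r θ) - h 0) * (starRingEnd ℂ) (h 0)).re) := by
    intro θ; rw [aux_norm_sq_expand (h (circleMap 0 r θ)) (h 0)]; ring
  calc ∫ θ in (-π)..π, ‖h (circleMap 0 r θ)‖^2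
      = ∫ θ in (-π)..π, (‖h 0‖^2 + (‖h (circleMap 0 r θ) - h 0‖^2
        + 2 * ((h (circleMap 0 r θ) - h 0) * (starRingEnd ℂ) (h 0)).re)) := by
        exact intervalIntegral.integral_congr (fun θ _ => expand θ)
    _ = (∫ _θ in (-π)..π, ‖h 0‖^2)
        + ((∫ θ in (-π)..π, ‖h (circleMap 0 r θ) - h 0‖^2)
          + ∫ θ in (-π)..π, 2 * ((h (circleMap 0 r θ) - h 0) * (starRingEnd ℂ) (h 0)).re) := by
        rw [intervalIntegral.integral_add (intervalIntegrable_const) (hint1.add hint2),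
          intervalIntegral.integral_add hint1 hint2]
    _ = 2*π*‖h 0‖^2 + ∫ θ in (-π)..π, ‖h (circleMap 0 r θ) - h 0‖^2 := by
        have hz : ∫ θ in (-π)..π, 2 * ((h (circleMap 0 r θ) - h 0) * (starRingEnd ℂ) (h 0)).re = 0 := by
          rw [intervalIntegral.integral_const_mul]
          have : ∫ θ in (-π)..π, ((h (circleMap 0 r θ) - h 0) * (starRingEnd ℂ) (h 0)).re
              = (∫ θ in (-π)..π, (h (circleMap 0 r θ) - h 0) * (starRingEnd ℂ) (h 0)).re := by
            apply aux_intervalIntegral_re hab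
            exact (((aux_circle_cont hr hd).sub continuous_const).mul continuous_const).intervalIntegrable _ _
          rw [this, intervalIntegral.integral_mul_const, intervalIntegral.integral_sub
            ((aux_circle_cont hr hd).intervalIntegrable _ _) (intervalIntegrable_const),
            aux_meanValue hr hd, intervalIntegral.integral_const]
          have : (π - -π) • h 0 = 2 * π * h 0 := by
            rw [sub_neg_eq_add, Complex.real_smul]; push_cast; ring
          rw [this, sub_self, zero_mul]
          simp
        rw [hz, add_zero, intervalIntegral.integral_const]
        have : (π - -π) • ‖h 0‖^2 = 2*π*‖h 0‖^2 := by
          rw [sub_neg_eq_add, smul_eq_mul]; ring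
        rw [this]


noncomputable def gtail (a : ℕ → ℂ) (N : ℕ) (w : ℂ) : ℂ := ∑' k, a (N+k) * w^k

section gtail
variable {a : ℕ → ℂ} {C u u' : ℝ}

lemma gtail_term_bound (hu0 : 0 < u) (hu'0 : 0 ≤ u') (hC : 0 ≤ C)
    (ha : ∀ n, ‖a n‖ ≤ C / u^n) (N : ℕ) {w : ℂ} (hw : ‖w‖ ≤ u') (k : ℕ) :
    ‖a (N+k) * w^k‖ ≤ (C/u^N) * (u'/u)^k := by
  have h1 : ‖a (N+k) * w^k‖ ≤ (C / u^(N+k)) * u'^k := by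
    rw [norm_mul, norm_pow]
    exact mul_le_mul (ha _) (pow_le_pow_left₀ (norm_nonneg w) hw k)
      (pow_nonneg (norm_nonneg w) k) (div_nonneg hC (pow_pos hu0 _).le)
  refine h1.trans (le_of_eq ?_)
  rw [pow_add, div_pow]
  field_simp

lemma gtail_summable (hu0 : 0 < u) (hu'0 : 0 ≤ u') (hC : 0 ≤ C) (hu'u : u' < u)
    (ha : ∀ n, ‖a n‖ ≤ C / u^n) (N : ℕ) {w : ℂ} (hw : ‖w‖ ≤ u') :
    Summable (fun k => ‖a (N+k) * w^k‖) := by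
  refine Summable.of_nonneg_of_le (fun k => norm_nonneg _)
    (gtail_term_bound hu0 hu'0 hC ha N hw)
    (Summable.mul_left _ (summable_geometric_of_lt_one (by positivity) ?_))
  rw [div_lt_one hu0]; exact hu'u

lemma gtail_bound (hu0 : 0 < u) (hu'0 : 0 ≤ u') (hC : 0 ≤ C) (hu'u : u' < u)
    (ha : ∀ n, ‖a n‖ ≤ C / u^n) (N : ℕ) {w : ℂ} (hw : ‖w‖ ≤ u') :
    ‖gtail a N w‖ ≤ (C * (1 - u'/u)⁻¹) / u^N := by
  have hq1 : u'/u < 1 := by rw [div_lt_one hu0]; exact hu'u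
  have hgeo : Summable (fun k : ℕ => (C/u^N) * (u'/u)^k) :=
    Summable.mul_left _ (summable_geometric_of_lt_one (by positivity) hq1)
  calc ‖gtail a N w‖ ≤ ∑' k, ‖a (N+k) * w^k‖ :=
        norm_tsum_le_tsum_norm (gtail_summable hu0 hu'0 hC hu'u ha N hw)
    _ ≤ ∑' k : ℕ, (C/u^N) * (u'/u)^k :=
        Summable.tsum_le_tsum (gtail_term_bound hu0 hu'0 hC ha N hw)
          (gtail_summable hu0 hu'0 hC hu'u ha N hw) hgeo
    _ = (C * (1 - u'/u)⁻¹) / u^N := by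
        rw [tsum_mul_left, tsum_geometric_of_lt_one (by positivity) hq1]
        ring

lemma gtail_diff (hu0 : 0 < u) (hu'0 : 0 ≤ u') (hC : 0 ≤ C) (hu'u : u' < u)
    (ha : ∀ n, ‖a n‖ ≤ C / u^n) (N : ℕ) :
    DifferentiableOn ℂ (gtail a N) (ball (0:ℂ) u') := by
  have hq1 : u'/u < 1 := by rw [div_lt_one hu0]; exact hu'u
  refine Complex.differentiableOn_tsum_of_summable_norm
    (u := fun k : ℕ => (C/u^N) * (u'/u)^k)
    (Summable.mul_left _ (summable_geometric_of_lt_one (by positivity) hq1))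
    (fun k => ((differentiable_const _).mul (differentiable_pow k)).differentiableOn)
    isOpen_ball (fun k w hw => ?_)
  exact gtail_term_bound hu0 hu'0 hC ha N (le_of_lt (mem_ball_zero_iff.1 hw)) k

lemma gtail_rec (hu0 : 0 < u) (hu'0 : 0 ≤ u') (hC : 0 ≤ C) (hu'u : u' < u)
    (ha : ∀ n, ‖a n‖ ≤ C / u^n) (N : ℕ) {w : ℂ} (hw : ‖w‖ ≤ u') :
    gtail a N w = a N + w * gtail a (N+1) w := by
  have hs : Summable (fun k => a (N+k) * w^k) :=
    (gtail_summable hu0 hu'0 hC hu'u ha N hw).of_norm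
  rw [gtail, hs.tsum_eq_zero_add]
  simp only [Nat.add_zero, pow_zero, mul_one]
  congr 1
  have : ∀ k : ℕ, a (N+(k+1)) * w^(k+1) = w * (a (N+1+k) * w^k) := by
    intro k
    have hk : N + (k+1) = N+1+k := by omega
    rw [hk, pow_succ]; ring
  rw [tsum_congr this, tsum_mul_left]
  rfl

lemma gtail_zero (hu0 : 0 < u) (hu'0 : 0 ≤ u') (hC : 0 ≤ C) (hu'u : u' < u)
    (ha : ∀ n, ‖a n‖ ≤ C / u^n) (N : ℕ) :
    gtail a N 0 = a N := by
  have := gtail_rec hu0 hu'0 hC hu'u ha N (w := 0) (by simpa using hu'0)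
  simpa using this

end gtail

lemma aux_circle_ineq {r : ℝ} (hr0 : 0 < r) (hr1 : r < 1)
    {ω f : ℂ → ℂ}
    (hωa : DifferentiableOn ℂ ω (ball (0 : ℂ) 1))
    (hωm : Set.MapsTo ω (ball (0 : ℂ) 1) (ball (0 : ℂ) 1))
    (hω0 : ω 0 = 0)
    (hf : DifferentiableOn ℂ f (ball (0 : ℂ) 1)) :
    ∫ θ in (-π)..π, ‖f (ω (circleMap 0 r θ))‖^2
      ≤ ∫ θ in (-π)..π, ‖f (circleMap 0 r θ)‖^2 := by
  have hab : (-π) ≤ π := by linarith [Real.pi_pos]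
  set u' : ℝ := (1+2*r)/3 with hu'def
  set u : ℝ := (2+r)/3 with hudef
  have hu'0 : 0 < u' := by rw [hu'def]; linarith
  have hru' : r < u' := by rw [hu'def]; linarith
  have hu'u : u' < u := by rw [hu'def, hudef]; linarith
  have hu1 : u < 1 := by rw [hudef]; linarith
  have hu0 : 0 < u := lt_trans hu'0 hu'u
  set v : ℝ := (3+r)/4 with hvdef
  have huv : u < v := by rw [hudef, hvdef]; linarith
  have hv1 : v < 1 := by rw [hvdef]; linarith
  have hv0 : 0 < v := by rw [hvdef]; linarith
  have hrv : r < v := lt_trans (lt_trans hru' hu'u) huv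
  -- power series of f
  have hV : ∃ V : ℝ≥0, (V : ℝ) = v := ⟨⟨v, hv0.le⟩, rfl⟩
  obtain ⟨V, hVv⟩ := hV
  have hU : ∃ U : ℝ≥0, (U : ℝ) = u := ⟨⟨u, hu0.le⟩, rfl⟩
  obtain ⟨U, hUu⟩ := hU
  obtain ⟨P, hp⟩ : ∃ P : FormalMultilinearSeries ℂ ℂ ℂ,
      HasFPowerSeriesOnBall f P 0 (V : ℝ≥0∞) := by
    have hf' : DifferentiableOn ℂ f (closedBall (0:ℂ) (V : ℝ)) := by
      refine hf.mono ?_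
      rw [hVv]
      exact closedBall_subset_ball hv1
    exact ⟨_, hf'.hasFPowerSeriesOnBall (by rw [← NNReal.coe_pos, hVv]; exact hv0)⟩
  set a : ℕ → ℂ := P.coeff with hadef
  -- coefficient bound
  obtain ⟨C, hC0, hCb⟩ := P.norm_mul_pow_le_of_lt_radius
    (r := U) (lt_of_lt_of_le (ENNReal.coe_lt_coe.2
      (by rw [← NNReal.coe_lt_coe, hUu, hVv]; exact huv)) hp.r_le)
  have ha : ∀ n, ‖a n‖ ≤ C / u^n := by
    intro n
    rw [hadef, ← P.norm_apply_eq_norm_coef]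
    rw [le_div_iff₀ (pow_pos hu0 n)]
    have := hCb n
    rwa [hUu] at this
  clear_value u u' v
  set K : ℝ := C * (1 - u'/u)⁻¹ with hKdef
  -- Schwarz
  have hsch : ∀ z : ℂ, ‖z‖ < 1 → ‖ω z‖ ≤ ‖z‖ := by
    intro z hz
    exact Complex.norm_le_norm_of_mapsTo_ball hωa (hωm.mono_right ball_subset_closedBall) hω0 hz
  have hcm : ∀ θ : ℝ, ‖circleMap 0 r θ‖ = r := by
    intro θ; simp [norm_circleMap_zero, abs_of_pos hr0]
  have hωr : ∀ θ : ℝ, ‖ω (circleMap 0 r θ)‖ ≤ r := by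
    intro θ
    refine le_trans (hsch _ ?_) (le_of_eq (hcm θ))
    rw [hcm θ]; exact hr1
  -- differentiability of compositions
  have hgd : ∀ N, DifferentiableOn ℂ (gtail a N) (ball (0:ℂ) u') :=
    fun N => gtail_diff hu0 hu'0.le hC0.le hu'u ha N
  have hgd' : ∀ N, DifferentiableOn ℂ (gtail a N) (closedBall (0:ℂ) r) :=
    fun N => (hgd N).mono (closedBall_subset_ball hru')
  have hcompdiff : ∀ N, DifferentiableOn ℂ (fun z => gtail a N (ω z)) (closedBall (0:ℂ) r) := by
    intro N
    refine (hgd N).comp (hωa.mono (closedBall_subset_ball hr1)) ?_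
    intro z hz
    have hz1 : ‖z‖ < 1 := lt_of_le_of_lt (mem_closedBall_zero_iff.1 hz) hr1
    have : ‖ω z‖ ≤ r := (hsch z hz1).trans (mem_closedBall_zero_iff.1 hz)
    exact mem_ball_zero_iff.2 (lt_of_le_of_lt this hru')
  -- f = gtail a 0 on closedBall r
  have hfg : ∀ w : ℂ, ‖w‖ ≤ r → f w = gtail a 0 w := by
    intro w hw
    have hw1 : w ∈ Metric.eball (0:ℂ) (V : ℝ≥0∞) := by
      rw [Metric.mem_eball, edist_zero_right, enorm_eq_nnnorm, ENNReal.coe_lt_coe, ← NNReal.coe_lt_coe, hVv,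
        coe_nnnorm]
      exact lt_of_le_of_lt hw hrv
    have hsum := hp.hasSum hw1
    rw [zero_add] at hsum
    have : (fun n => P n fun _ => w) = fun n => a (0+n) * w^n := by
      funext n
      rw [P.apply_eq_pow_smul_coeff, smul_eq_mul, ← hadef, Nat.zero_add]
      ring
    rw [this] at hsum
    exact (hsum.tsum_eq).symm
  -- continuity
  have hcω : ∀ N, Continuous fun θ => gtail a N (ω (circleMap 0 r θ)) :=
    fun N => aux_circle_cont hr0 (hcompdiff N)
  have hcc : ∀ N, Continuous fun θ => gtail a N (circleMap 0 r θ) :=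
    fun N => aux_circle_cont hr0 (hgd' N)
  set Iω : ℕ → ℝ := fun N => ∫ θ in (-π)..π, ‖gtail a N (ω (circleMap 0 r θ))‖^2 with hIωdef
  set Ic : ℕ → ℝ := fun N => ∫ θ in (-π)..π, ‖gtail a N (circleMap 0 r θ)‖^2 with hIcdef
  have main : ∀ N M : ℕ, Iω M ≤ Ic M + 2*π*(r^2)^N * (K/u^(M+N))^2 := by
    intro N
    induction N with
    | zero =>
      intro M
      have pb : ∀ θ : ℝ, ‖gtail a M (ω (circleMap 0 r θ))‖^2 ≤ (K/u^M)^2 := by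
        intro θ
        have hb := gtail_bound hu0 hu'0.le hC0.le hu'u ha M ((hωr θ).trans hru'.le)
        calc ‖gtail a M (ω (circleMap 0 r θ))‖^2 ≤ ((C * (1 - u'/u)⁻¹)/u^M)^2 :=
              pow_le_pow_left₀ (norm_nonneg _) hb 2
          _ = (K/u^M)^2 := by rw [hKdef]
      have h1 : Iω M ≤ ∫ _θ in (-π)..π, (K/u^M)^2 := by
        refine intervalIntegral.integral_mono_on hab ?_ intervalIntegrable_const (fun θ _ => pb θ)
        exact ((hcω M).norm.pow 2).intervalIntegrable _ _
      have h2 : 0 ≤ Ic M := intervalIntegral.integral_nonneg hab (fun θ _ => sq_nonneg _)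
      have h3 : ∫ _θ in (-π)..π, (K/u^M)^2 = 2*π*(K/u^M)^2 := by
        rw [intervalIntegral.integral_const, sub_neg_eq_add, smul_eq_mul]; ring
      simp only [pow_zero, mul_one, Nat.add_zero]
      rw [h3] at h1
      linarith
    | succ N ih =>
      intro M
      have e0 : gtail a M (ω 0) = a M := by
        rw [hω0]; exact gtail_zero hu0 hu'0.le hC0.le hu'u ha M
      have e0' : gtail a M 0 = a M := gtail_zero hu0 hu'0.le hC0.le hu'u ha M
      have horth1 := aux_orth hr0 (hcompdiff M)
      have horth2 := aux_orth hr0 (hgd' M)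
      rw [e0] at horth1
      rw [e0'] at horth2
      have hstep1 : ∀ θ : ℝ, ‖gtail a M (ω (circleMap 0 r θ)) - a M‖^2
          ≤ r^2 * ‖gtail a (M+1) (ω (circleMap 0 r θ))‖^2 := by
        intro θ
        rw [gtail_rec hu0 hu'0.le hC0.le hu'u ha M ((hωr θ).trans hru'.le), add_sub_cancel_left,
          norm_mul, mul_pow]
        exact mul_le_mul_of_nonneg_right (pow_le_pow_left₀ (norm_nonneg _) (hωr θ) 2) (sq_nonneg _)
      have hstep2 : ∀ θ : ℝ, ‖gtail a M (circleMap 0 r θ) - a M‖^2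
          = r^2 * ‖gtail a (M+1) (circleMap 0 r θ)‖^2 := by
        intro θ
        have hwu : ‖circleMap 0 r θ‖ ≤ u' := by rw [hcm θ]; exact hru'.le
        rw [gtail_rec hu0 hu'0.le hC0.le hu'u ha M hwu, add_sub_cancel_left, norm_mul,
          mul_pow, hcm θ]
      have hI1 : (∫ θ in (-π)..π, ‖gtail a M (ω (circleMap 0 r θ)) - a M‖^2)
          ≤ r^2 * Iω (M+1) := by
        rw [hIωdef, ← intervalIntegral.integral_const_mul]
        refine intervalIntegral.integral_mono_on hab ?_ ?_ (fun θ _ => hstep1 θ)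
        · exact (((hcω M).sub continuous_const).norm.pow 2).intervalIntegrable _ _
        · exact (continuous_const.mul ((hcω (M+1)).norm.pow 2)).intervalIntegrable _ _
      have hI2 : (∫ θ in (-π)..π, ‖gtail a M (circleMap 0 r θ) - a M‖^2)
          = r^2 * Ic (M+1) := by
        rw [hIcdef, ← intervalIntegral.integral_const_mul]
        exact intervalIntegral.integral_congr (fun θ _ => hstep2 θ)
      have ihM := ih (M+1)
      have hfinal : r^2 * (2*π*(r^2)^N*(K/u^(M+1+N))^2) = 2*π*(r^2)^(N+1)*(K/u^(M+(N+1)))^2 := by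
        have : M+1+N = M+(N+1) := by omega
        rw [this]; ring
      calc Iω M = 2*π*‖a M‖^2 + ∫ θ in (-π)..π, ‖gtail a M (ω (circleMap 0 r θ)) - a M‖^2 := horth1
        _ ≤ 2*π*‖a M‖^2 + r^2 * Iω (M+1) := by linarith
        _ ≤ 2*π*‖a M‖^2 + r^2 * (Ic (M+1) + 2*π*(r^2)^N*(K/u^(M+1+N))^2) := by
            have := mul_le_mul_of_nonneg_left ihM (sq_nonneg r)
            linarith
        _ = (2*π*‖a M‖^2 + ∫ θ in (-π)..π, ‖gtail a M (circleMap 0 r θ) - a M‖^2)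
            + 2*π*(r^2)^(N+1)*(K/u^(M+(N+1)))^2 := by
            rw [hI2, ← hfinal]; ring
        _ = Ic M + 2*π*(r^2)^(N+1)*(K/u^(M+(N+1)))^2 := by rw [← horth2]
  -- take the limit
  have hρ0 : (0:ℝ) ≤ (r/u)^2 := sq_nonneg _
  have hρ1 : (r/u)^2 < 1 := by
    have : r/u < 1 := by rw [div_lt_one hu0]; linarith
    nlinarith [div_nonneg hr0.le hu0.le]
  have hterm : ∀ N : ℕ, 2*π*(r^2)^N * (K/u^(0+N))^2 = (2*π*K^2) * ((r/u)^2)^N := by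
    intro N
    rw [Nat.zero_add]
    have hun : u ^ N ≠ 0 := pow_ne_zero _ hu0.ne'
    have hu : u ≠ 0 := hu0.ne'
    ring
  have hlim : Tendsto (fun N : ℕ => Ic 0 + (2*π*K^2) * ((r/u)^2)^N) atTop (nhds (Ic 0)) := by
    have h := tendsto_pow_atTop_nhds_zero_of_lt_one hρ0 hρ1
    have := Tendsto.add (tendsto_const_nhds (x := Ic 0)) (h.const_mul (2*π*K^2))
    simpa using this
  have hle : Iω 0 ≤ Ic 0 := by
    refine ge_of_tendsto' hlim (fun N => ?_)
    have := main N 0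
    rwa [hterm N] at this
  -- conclude
  have e1 : EqOn (fun θ : ℝ => ‖f (ω (circleMap 0 r θ))‖^2)
      (fun θ => ‖gtail a 0 (ω (circleMap 0 r θ))‖^2) (uIcc (-π) π) := by
    intro θ _; simp only; rw [hfg _ (hωr θ)]
  have e2 : EqOn (fun θ : ℝ => ‖f (circleMap 0 r θ)‖^2)
      (fun θ => ‖gtail a 0 (circleMap 0 r θ)‖^2) (uIcc (-π) π) := by
    intro θ _; simp only; rw [hfg _ (hcm θ).le]
  rw [intervalIntegral.integral_congr e1, intervalIntegral.integral_congr e2]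
  exact hle


lemma aux_vDensity_congr (α : ℝ) (j : ℕ) {z w : ℂ} (h : ‖z‖ = ‖w‖) :
    vDensity α j z = vDensity α j w := by
  simp only [vDensity, h]

lemma aux_iterLog_measurable (ℓ : ℕ) : Measurable (iterLog ℓ) := by
  induction ℓ with
  | zero => exact measurable_id
  | succ n ih => exact Real.measurable_log.comp ih

lemma aux_measurable_rpow_const (c : ℝ) : Measurable fun x : ℝ => x ^ c := by
  have hfe : (fun x : ℝ => x ^ c) = fun x =>
      if x = 0 then (if c = 0 then 1 else 0)
      else Real.exp (Real.log x * c) * (if x < 0 then Real.cos (c * π) else 1) := by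
    funext x
    rcases lt_trichotomy x 0 with hx | hx | hx
    · rw [Real.rpow_def_of_neg hx]
      simp [hx.ne, hx, mul_comm]
    · subst hx
      rw [if_pos rfl]
      by_cases hc : c = 0
      · rw [if_pos hc, hc, Real.rpow_zero]
      · rw [if_neg hc, Real.zero_rpow hc]
    · rw [Real.rpow_def_of_pos hx]
      simp [hx.ne', not_lt.2 hx.le]
  rw [hfe]
  have h0 : MeasurableSet {x : ℝ | x = 0} := by
    simpa using measurableSet_singleton (0:ℝ)
  refine Measurable.ite h0 measurable_const ?_
  refine (Real.measurable_exp.comp (Real.measurable_log.mul_const c)).mul ?_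
  exact Measurable.ite measurableSet_Iio measurable_const measurable_const

lemma aux_vDensity_measurable (α : ℝ) (j : ℕ) :
    Measurable (fun r : ℝ => vDensity α j ((r : ℂ))) := by
  have hb : Measurable (fun r : ℝ => 1 - ‖(r:ℂ)‖^2) :=
    measurable_const.sub (Complex.measurable_ofReal.norm.pow_const 2)
  unfold vDensity
  split_ifs with h
  · exact measurable_const.mul ((aux_measurable_rpow_const _).comp hb)
  · refine Measurable.mul (Measurable.mul (measurable_const.div hb) ?_) ?_
    · exact (Finset.measurable_prod _ (fun ℓ _ =>
        (aux_iterLog_measurable ℓ).comp (measurable_const.div hb))).inv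
    · exact (aux_measurable_rpow_const _).comp ((aux_iterLog_measurable (j-1)).comp (measurable_const.div hb))

lemma aux_real_lintegral_polar (H : ℝ × ℝ → ℝ≥0∞) :
    ∫⁻ p in polarCoord.target, ENNReal.ofReal p.1 * H (polarCoord.symm p) = ∫⁻ p, H p := by
  set B : ℝ × ℝ → ℝ × ℝ →L[ℝ] ℝ × ℝ := fun p =>
    LinearMap.toContinuousLinearMap (Matrix.toLin (Module.Basis.finTwoProd ℝ) (Module.Basis.finTwoProd ℝ)
      !![Real.cos p.2, -p.1 * Real.sin p.2; Real.sin p.2, p.1 * Real.cos p.2]) with hB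
  have A : ∀ p ∈ polarCoord.target, HasFDerivWithinAt polarCoord.symm (B p) polarCoord.target p :=
    fun p _ => by
      have := (hasFDerivAt_polarCoord_symm p).hasFDerivWithinAt (s := polarCoord.target)
      exact this
  have B_det : ∀ p, (B p).det = p.1 := by
    intro p
    conv_rhs => rw [← one_mul p.1, ← Real.cos_sq_add_sin_sq p.2]
    simp only [hB, neg_mul, LinearMap.det_toContinuousLinearMap, LinearMap.det_toLin,
      Matrix.det_fin_two_of, sub_neg_eq_add]
    ring
  symm
  calc ∫⁻ p, H p = ∫⁻ p in polarCoord.source, H p := by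
        rw [← setLIntegral_univ, ← Measure.restrict_congr_set polarCoord_source_ae_eq_univ]
    _ = ∫⁻ p in polarCoord.symm '' polarCoord.target, H p := by
        rw [polarCoord.symm_image_target_eq_source]
    _ = ∫⁻ p in polarCoord.target, ENNReal.ofReal |(B p).det| * H (polarCoord.symm p) :=
        lintegral_image_eq_lintegral_abs_det_fderiv_mul volume
          polarCoord.open_target.measurableSet A polarCoord.symm.injOn H
    _ = ∫⁻ p in polarCoord.target, ENNReal.ofReal p.1 * H (polarCoord.symm p) := by
        refine setLIntegral_congr_fun polarCoord.open_target.measurableSet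
          (fun p hp => ?_)
        rw [B_det, abs_of_pos hp.1]

lemma aux_complex_lintegral_polar (H : ℂ → ℝ≥0∞) :
    ∫⁻ p in polarCoord.target, ENNReal.ofReal p.1 * H (Complex.polarCoord.symm p) = ∫⁻ z, H z := by
  rw [← (Complex.volume_preserving_equiv_real_prod.symm).lintegral_comp_emb
    Complex.measurableEquivRealProd.symm.measurableEmbedding, ← aux_real_lintegral_polar]
  rfl

lemma aux_polarSymm_circleMap (p : ℝ × ℝ) :
    Complex.polarCoord.symm p = circleMap 0 p.1 p.2 := by
  rw [Complex.polarCoord_symm_apply, circleMap, Complex.exp_mul_I]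
  push_cast
  ring

lemma aux_polar_eq (α : ℝ) (j : ℕ) (g : ℂ → ℂ) (hg : ContinuousOn g (ball (0:ℂ) 1)) :
    ∫⁻ z in ball (0:ℂ) 1, ENNReal.ofReal (‖g z‖^2 * vDensity α j z)
      = ∫⁻ r in Ioo (0:ℝ) 1, ENNReal.ofReal (r * vDensity α j ((r:ℂ)))
          * ∫⁻ θ in Ioo (-π) π, ENNReal.ofReal (‖g (circleMap 0 r θ)‖^2) := by
  have h1 : ∫⁻ z in ball (0:ℂ) 1, ENNReal.ofReal (‖g z‖^2 * vDensity α j z)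
      = ∫⁻ z, (ball (0:ℂ) 1).indicator
          (fun z => ENNReal.ofReal (‖g z‖^2 * vDensity α j z)) z := by
    rw [lintegral_indicator measurableSet_ball _]
  rw [h1, ← aux_complex_lintegral_polar]
  set s : Set (ℝ × ℝ) := Ioo (0:ℝ) 1 ×ˢ Ioo (-π) π with hs
  have hsm : MeasurableSet s := measurableSet_Ioo.prod measurableSet_Ioo
  have hsub : s ⊆ polarCoord.target := by
    intro p hp; exact ⟨hp.1.1, hp.2⟩
  have h2 : ∀ p ∈ polarCoord.target,
      ENNReal.ofReal p.1 * (ball (0:ℂ) 1).indicator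
          (fun z => ENNReal.ofReal (‖g z‖^2 * vDensity α j z)) (Complex.polarCoord.symm p)
      = s.indicator (fun q => ENNReal.ofReal (q.1 * vDensity α j ((q.1:ℂ)))
          * ENNReal.ofReal (‖g (circleMap 0 q.1 q.2)‖^2)) p := by
    intro p hp
    have hp1 : (0:ℝ) < p.1 := hp.1
    have hnorm : ‖circleMap 0 p.1 p.2‖ = p.1 := by
      simp [norm_circleMap_zero, abs_of_pos hp1]
    rw [aux_polarSymm_circleMap]
    by_cases hps : p ∈ s
    · have hmem : circleMap 0 p.1 p.2 ∈ ball (0:ℂ) 1 := by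
        rw [mem_ball_zero_iff, hnorm]; exact hps.1.2
      rw [indicator_of_mem hmem, indicator_of_mem hps]
      have hvd : vDensity α j (circleMap 0 p.1 p.2) = vDensity α j ((p.1:ℂ)) := by
        refine aux_vDensity_congr α j ?_
        rw [hnorm, Complex.norm_real, Real.norm_eq_abs, abs_of_pos hp1]
      rw [hvd, ENNReal.ofReal_mul (sq_nonneg _), ENNReal.ofReal_mul hp1.le]
      ring
    · have hmem : circleMap 0 p.1 p.2 ∉ ball (0:ℂ) 1 := fun hmem =>
        hps ⟨⟨hp1, by rwa [mem_ball_zero_iff, hnorm] at hmem⟩, hp.2⟩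
      rw [indicator_of_notMem hmem, indicator_of_notMem hps, mul_zero]
  rw [setLIntegral_congr_fun polarCoord.open_target.measurableSet h2,
    lintegral_indicator hsm _, Measure.restrict_restrict hsm,
    inter_eq_self_of_subset_left hsub]
  -- Tonelli
  have hcma : Continuous (fun q : ℝ × ℝ => circleMap 0 q.1 q.2) := by
    simp only [circleMap, zero_add]
    exact (Complex.continuous_ofReal.comp continuous_fst).mul
      (Complex.continuous_exp.comp
        ((Complex.continuous_ofReal.comp continuous_snd).mul continuous_const))
  have hcgc : ContinuousOn (fun q : ℝ × ℝ => g (circleMap 0 q.1 q.2)) s := by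
    refine hg.comp hcma.continuousOn ?_
    intro q hq
    rw [mem_ball_zero_iff]
    have : ‖circleMap 0 q.1 q.2‖ = |q.1| := by
      simp [norm_circleMap_zero]
    rw [this, abs_of_pos hq.1.1]
    exact hq.1.2
  have hmeas : AEMeasurable (fun q : ℝ × ℝ => ENNReal.ofReal (q.1 * vDensity α j ((q.1:ℂ)))
      * ENNReal.ofReal (‖g (circleMap 0 q.1 q.2)‖^2)) (volume.restrict s) := by
    refine AEMeasurable.fun_mul ?_ ?_
    · exact (ENNReal.measurable_ofReal.comp (measurable_fst.mul
        ((aux_vDensity_measurable α j).comp measurable_fst))).aemeasurable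
    · exact (ENNReal.continuous_ofReal.comp_continuousOn (hcgc.norm.pow 2)).aemeasurable hsm
  have hrs : volume.restrict s
      = (volume.restrict (Ioo (0:ℝ) 1)).prod (volume.restrict (Ioo (-π) π)) := by
    rw [Measure.prod_restrict, ← Measure.volume_eq_prod, hs]
  rw [hrs, lintegral_prod _ (by rwa [← hrs])]
  refine lintegral_congr fun r => ?_
  show (∫⁻ y in Ioo (-π) π,
      ENNReal.ofReal (r * vDensity α j ((r:ℂ))) * ENNReal.ofReal (‖g (circleMap 0 r y)‖^2)) = _
  exact lintegral_const_mul' _ _ ENNReal.ofReal_ne_top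

lemma aux_lintegral_of_interval {X Y : ℝ → ℝ} (hX : Continuous X) (hY : Continuous Y)
    (hXn : ∀ θ, 0 ≤ X θ) (hYn : ∀ θ, 0 ≤ Y θ)
    (h : (∫ θ in (-π)..π, X θ) ≤ ∫ θ in (-π)..π, Y θ) :
    ∫⁻ θ in Ioo (-π) π, ENNReal.ofReal (X θ) ≤ ∫⁻ θ in Ioo (-π) π, ENNReal.ofReal (Y θ) := by
  have hab : (-π) ≤ π := by linarith [Real.pi_pos]
  have hXi : IntegrableOn X (Ioo (-π) π) volume :=
    (hX.integrableOn_Icc).mono_set Ioo_subset_Icc_self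
  have hYi : IntegrableOn Y (Ioo (-π) π) volume :=
    (hY.integrableOn_Icc).mono_set Ioo_subset_Icc_self
  have eX : ∫⁻ θ in Ioo (-π) π, ENNReal.ofReal (X θ)
      = ENNReal.ofReal (∫ θ in Ioo (-π) π, X θ) :=
    (ofReal_integral_eq_lintegral_ofReal hXi (ae_of_all _ hXn)).symm
  have eY : ∫⁻ θ in Ioo (-π) π, ENNReal.ofReal (Y θ)
      = ENNReal.ofReal (∫ θ in Ioo (-π) π, Y θ) :=
    (ofReal_integral_eq_lintegral_ofReal hYi (ae_of_all _ hYn)).symm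
  rw [eX, eY]
  apply ENNReal.ofReal_le_ofReal
  rw [← integral_Ioc_eq_integral_Ioo, ← integral_Ioc_eq_integral_Ioo,
    ← intervalIntegral.integral_of_le hab, ← intervalIntegral.integral_of_le hab]
  exact h


/-- Contractive subordination in `D_{α,j}(𝔻)`: if `ω : ℂ → ℂ` is analytic with `ω(0) = 0`,
then `∫_𝔻 |f ∘ ω|² dv_{α,j} ≤ ∫_𝔻 |f|² dv_{α,j}` for every analytic `f`. -/
theorem contractive_subordination (α : ℝ) (hα : 0 < α) (j : ℕ) (hj : 1 ≤ j)
    (ω : ℂ → ℂ)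
    (hωa : DifferentiableOn ℂ ω (Metric.ball (0 : ℂ) 1))
    (hωm : Set.MapsTo ω (Metric.ball (0 : ℂ) 1) (Metric.ball (0 : ℂ) 1))
    (hω0 : ω 0 = 0) :
    ∀ f : ℂ → ℂ, DifferentiableOn ℂ f (Metric.ball (0 : ℂ) 1) →
      (∫⁻ z in Metric.ball (0 : ℂ) 1, ENNReal.ofReal (‖f (ω z)‖ ^ 2 * vDensity α j z))
        ≤ ∫⁻ z in Metric.ball (0 : ℂ) 1, ENNReal.ofReal (‖f z‖ ^ 2 * vDensity α j z) := by
  intro f hfd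
  have h1 : (∫⁻ z in Metric.ball (0 : ℂ) 1, ENNReal.ofReal (‖f (ω z)‖ ^ 2 * vDensity α j z))
      = ∫⁻ r in Set.Ioo (0:ℝ) 1, ENNReal.ofReal (r * vDensity α j ((r:ℂ)))
          * ∫⁻ θ in Set.Ioo (-π) π, ENNReal.ofReal (‖f (ω (circleMap 0 r θ))‖^2) :=
    aux_polar_eq α j (fun z => f (ω z)) ((hfd.continuousOn).comp hωa.continuousOn hωm)
  have h2 : (∫⁻ z in Metric.ball (0 : ℂ) 1, ENNReal.ofReal (‖f z‖ ^ 2 * vDensity α j z))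
      = ∫⁻ r in Set.Ioo (0:ℝ) 1, ENNReal.ofReal (r * vDensity α j ((r:ℂ)))
          * ∫⁻ θ in Set.Ioo (-π) π, ENNReal.ofReal (‖f (circleMap 0 r θ)‖^2) :=
    aux_polar_eq α j f hfd.continuousOn
  rw [h1, h2]
  refine lintegral_mono_ae ((ae_restrict_iff' measurableSet_Ioo).2 (ae_of_all _ ?_))
  intro r hr
  refine mul_le_mul_right ?_ _
  have hcm : Continuous fun θ : ℝ => circleMap 0 r θ := continuous_circleMap 0 r
  have hmem : ∀ θ : ℝ, circleMap 0 r θ ∈ Metric.ball (0:ℂ) 1 := by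
    intro θ
    rw [mem_ball_zero_iff]
    have : ‖circleMap 0 r θ‖ = |r| := by simp [norm_circleMap_zero]
    rw [this, abs_of_pos hr.1]; exact hr.2
  have hc2 : Continuous fun θ => f (circleMap 0 r θ) :=
    hfd.continuousOn.comp_continuous hcm hmem
  have hc1 : Continuous fun θ => f (ω (circleMap 0 r θ)) :=
    ((hfd.continuousOn).comp hωa.continuousOn hωm).comp_continuous hcm hmem
  exact aux_lintegral_of_interval (hc1.norm.pow 2) (hc2.norm.pow 2)
    (fun θ => sq_nonneg _) (fun θ => sq_nonneg _)
    (aux_circle_ineq hr.1 hr.2 hωa hωm hω0 hfd)
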